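/- Let A be a σ-unital C*-algebra with countable approximate unit (eₙ). For any strictly separable subset X of the multiplier algebra M(A), there exists a nondegenerate separable C*-subalgebra B ⊆ A such that every element of X is a multiplier of B; explicitly, the C*-subalgebra B generated by { x eₙ : n ∈ ℕ, x ∈ X ∪ X* ∪ {1} } is separable, contains the approximate unit (eₙ) (hence is nondegenerate in A), and satisfies xB ⊆ B and Bx ⊆ B for all x ∈ X. -/
import Mathlib

open scoped MultiplierAlgebra
open Filter

/-- Strict convergence of a sequence in the multiplier algebra `𝓜(ℂ, A)`. -/
def StrictTendsto {A : Type*} [NonUnitalCStarAlgebra A]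
    (s : ℕ → 𝓜(ℂ, A)) (T : 𝓜(ℂ, A)) : Prop :=
  ∀ a : A, Tendsto (fun n => ‖(s n - T) * (a : 𝓜(ℂ, A))‖) atTop (nhds 0) ∧
    Tendsto (fun n => ‖(a : 𝓜(ℂ, A)) * (s n - T)‖) atTop (nhds 0)

/-- A countable approximate unit of positive contractions (σ-unitality witness). -/
def IsApproxUnit {A : Type*} [NonUnitalCStarAlgebra A] (e : ℕ → A) : Prop :=
  (∀ n, (∃ b, e n = star b * b) ∧ ‖e n‖ ≤ 1) ∧
  ∀ x : A, Tendsto (fun n => ‖e n * x - x‖) atTop (nhds 0) ∧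
    Tendsto (fun n => ‖x * e n - x‖) atTop (nhds 0)

namespace SepExhAux

variable {A : Type*} [NonUnitalCStarAlgebra A]

lemma norm_coe (a : A) : ‖(a : 𝓜(ℂ, A))‖ = ‖a‖ := by
  rw [← DoubleCentralizer.norm_fst, DoubleCentralizer.coe_fst,
    ContinuousLinearMap.opNorm_mul_apply]

lemma mul_coe (e : ℕ → A) (he : IsApproxUnit e) (x : 𝓜(ℂ, A)) (a : A) :
    x * (a : 𝓜(ℂ, A)) = ((x.fst a : A) : 𝓜(ℂ, A)) := by
  refine DoubleCentralizer.ext ℂ A _ _ (Prod.ext ?_ ?_)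
  · ext b
    show x.fst (a * b) = x.fst a * b
    have key : ∀ c : A, c * x.fst (a * b) = c * (x.fst a * b) := fun c => by
      rw [← x.central, ← mul_assoc, x.central, mul_assoc]
    have h1 : Tendsto (fun n => e n * x.fst (a * b)) atTop (nhds (x.fst (a * b))) := by
      rw [tendsto_iff_norm_sub_tendsto_zero]
      exact (he.2 (x.fst (a * b))).1
    have h2 : Tendsto (fun n => e n * (x.fst a * b)) atTop (nhds (x.fst a * b)) := by
      rw [tendsto_iff_norm_sub_tendsto_zero]
      exact (he.2 (x.fst a * b)).1
    have : (fun n => e n * x.fst (a * b)) = fun n => e n * (x.fst a * b) := by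
      funext n; exact key (e n)
    rw [this] at h1
    exact tendsto_nhds_unique h1 h2
  · ext c
    show x.snd c * a = c * x.fst a
    exact x.central c a

lemma coe_mul (e : ℕ → A) (he : IsApproxUnit e) (x : 𝓜(ℂ, A)) (a : A) :
    (a : 𝓜(ℂ, A)) * x = ((x.snd a : A) : 𝓜(ℂ, A)) := by
  refine DoubleCentralizer.ext ℂ A _ _ (Prod.ext ?_ ?_)
  · ext b
    show a * x.fst b = x.snd a * b
    exact (x.central a b).symm
  · ext c
    show x.snd (c * a) = c * x.snd a
    have key : ∀ d : A, x.snd (c * a) * d = (c * x.snd a) * d := fun d => by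
      rw [x.central, mul_assoc, ← x.central, ← mul_assoc]
    have h1 : Tendsto (fun n => x.snd (c * a) * e n) atTop (nhds (x.snd (c * a))) := by
      rw [tendsto_iff_norm_sub_tendsto_zero]
      exact (he.2 (x.snd (c * a))).2
    have h2 : Tendsto (fun n => (c * x.snd a) * e n) atTop (nhds (c * x.snd a)) := by
      rw [tendsto_iff_norm_sub_tendsto_zero]
      exact (he.2 (c * x.snd a)).2
    have : (fun n => x.snd (c * a) * e n) = fun n => (c * x.snd a) * e n := by
      funext n; exact key (e n)
    rw [this] at h1
    exact tendsto_nhds_unique h1 h2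

lemma countable_semigroup_closure {M : Type*} [Monoid M] {s : Set M} (hs : s.Countable) :
    (Subsemigroup.closure s : Set M).Countable := by
  have : Countable ↥s := hs.to_subtype
  have hsub : (Subsemigroup.closure s : Set M) ⊆
      Set.range (fun l : List s => (l.map Subtype.val).prod) := by
    let T : Subsemigroup M :=
      { carrier := Set.range (fun l : List s => (l.map Subtype.val).prod)
        mul_mem' := by
          rintro x y ⟨l₁, rfl⟩ ⟨l₂, rfl⟩
          exact ⟨l₁ ++ l₂, by simp⟩ }
    have : s ⊆ (T : Set M) := fun x hx => ⟨[⟨x, hx⟩], by simp⟩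
    exact Subsemigroup.closure_le.mpr this
  exact (Set.countable_range _).mono hsub

end SepExhAux

/-- If `A` is σ-unital with approximate unit `(eₙ)` and `X ⊆ 𝓜(ℂ, A)` is strictly
separable, then the C*-subalgebra `B` generated by `{x eₙ : x ∈ X ∪ X* ∪ {1}}` is a
(norm-)separable nondegenerate subalgebra of `A` containing the approximate unit, and
every element of `X` multiplies `B` into itself. -/
theorem separable_exhaustion_multipliers {A : Type*} [NonUnitalCStarAlgebra A]
    (e : ℕ → A) (he : IsApproxUnit e)
    (X : Set 𝓜(ℂ, A))
    (hXsep : ∃ D : Set 𝓜(ℂ, A), D.Countable ∧ ∀ x ∈ X, ∃ s : ℕ → 𝓜(ℂ, A),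
      (∀ n, s n ∈ D) ∧ StrictTendsto s x)
    (B : Set 𝓜(ℂ, A))
    (hB : B = closure (NonUnitalStarAlgebra.adjoin ℂ
      {y : 𝓜(ℂ, A) | ∃ x ∈ X ∪ (star '' X) ∪ {1}, ∃ n : ℕ, y = x * (e n : 𝓜(ℂ, A))} :
        Set 𝓜(ℂ, A))) :
    B ⊆ Set.range (fun a : A => (a : 𝓜(ℂ, A))) ∧
    TopologicalSpace.IsSeparable B ∧
    (∀ n, (e n : 𝓜(ℂ, A)) ∈ B) ∧
    ∀ x ∈ X, ∀ b ∈ B, x * b ∈ B ∧ b * x ∈ B := by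
  set S : Set 𝓜(ℂ, A) :=
    {y : 𝓜(ℂ, A) | ∃ x ∈ X ∪ (star '' X) ∪ {1}, ∃ n : ℕ, y = x * (e n : 𝓜(ℂ, A))} with hSdef
  -- coercion is an isometric star algebra hom
  let ι : A →⋆ₙₐ[ℂ] 𝓜(ℂ, A) := DoubleCentralizer.coeHom (𝕜 := ℂ) (A := A)
  have hι : ∀ a : A, ι a = (a : 𝓜(ℂ, A)) := fun a => rfl
  have hisom : Isometry (fun a : A => (a : 𝓜(ℂ, A))) :=
    AddMonoidHomClass.isometry_of_norm ι SepExhAux.norm_coe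
  have hclosed : IsClosed (Set.range (fun a : A => (a : 𝓜(ℂ, A)))) :=
    hisom.isClosedEmbedding.isClosed_range
  -- Part 1
  have hSrange : S ⊆ Set.range (fun a : A => (a : 𝓜(ℂ, A))) := by
    rintro y ⟨x, -, n, rfl⟩
    exact ⟨x.fst (e n), (SepExhAux.mul_coe e he x (e n)).symm⟩
  have hadj_range : (NonUnitalStarAlgebra.adjoin ℂ S : Set 𝓜(ℂ, A)) ⊆
      Set.range (fun a : A => (a : 𝓜(ℂ, A))) := by
    have h : S ⊆ (NonUnitalStarAlgHom.range ι : Set 𝓜(ℂ, A)) := by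
      intro y hy
      obtain ⟨a, ha⟩ := hSrange hy
      exact ⟨a, ha⟩
    have := NonUnitalStarAlgebra.adjoin_le (R := ℂ) (s := S)
      (S := NonUnitalStarAlgHom.range ι) h
    intro y hy
    obtain ⟨a, ha⟩ := this hy
    exact ⟨a, ha⟩
  have part1 : B ⊆ Set.range (fun a : A => (a : 𝓜(ℂ, A))) := by
    rw [hB]
    exact closure_minimal hadj_range hclosed
  -- Part 3
  have hgenS : ∀ n, (e n : 𝓜(ℂ, A)) ∈ S := fun n =>
    ⟨1, Or.inr rfl, n, (one_mul _).symm⟩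
  have part3 : ∀ n, (e n : 𝓜(ℂ, A)) ∈ B := fun n => by
    rw [hB]
    exact subset_closure (NonUnitalStarAlgebra.subset_adjoin ℂ S (hgenS n))
  -- B as a star subalgebra
  have hBc : B = ((NonUnitalStarAlgebra.adjoin ℂ S).topologicalClosure : Set 𝓜(ℂ, A)) := hB
  have hmulB : ∀ a ∈ B, ∀ b ∈ B, a * b ∈ B := by
    rw [hBc]
    intro a ha b hb
    exact mul_mem ha hb
  have hstarB : ∀ a ∈ B, star a ∈ B := by
    rw [hBc]
    intro a ha
    exact star_mem ha
  have hBclosed : IsClosed B := by rw [hB]; exact isClosed_closure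
  -- e n is self-adjoint (as a coercion)
  have hesa : ∀ n, star ((e n : 𝓜(ℂ, A))) = (e n : 𝓜(ℂ, A)) := fun n => by
    obtain ⟨⟨b, hb⟩, -⟩ := he.1 n
    rw [← hι, ← map_star ι, hb, star_mul, star_star]
  -- Part 4
  have part4 : ∀ x ∈ X, ∀ b ∈ B, x * b ∈ B ∧ b * x ∈ B := by
    intro x hx b hb
    obtain ⟨a, ha⟩ := part1 hb
    have hxen : ∀ n, x * (e n : 𝓜(ℂ, A)) ∈ B := fun n => by
      rw [hB]
      exact subset_closure (NonUnitalStarAlgebra.subset_adjoin ℂ S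
        ⟨x, Or.inl (Or.inl hx), n, rfl⟩)
    have hsxen : ∀ n, (star x) * (e n : 𝓜(ℂ, A)) ∈ B := fun n => by
      rw [hB]
      exact subset_closure (NonUnitalStarAlgebra.subset_adjoin ℂ S
        ⟨star x, Or.inl (Or.inr ⟨x, hx, rfl⟩), n, rfl⟩)
    have henx : ∀ n, (e n : 𝓜(ℂ, A)) * x ∈ B := fun n => by
      have : (e n : 𝓜(ℂ, A)) * x = star ((star x) * (e n : 𝓜(ℂ, A))) := by
        rw [star_mul, star_star, hesa n]
      rw [this]
      exact hstarB _ (hsxen n)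
    constructor
    · -- x * b
      have hterm : ∀ n, (x * (e n : 𝓜(ℂ, A))) * b ∈ B := fun n =>
        hmulB _ (hxen n) _ hb
      have htend : Tendsto (fun n => (x * (e n : 𝓜(ℂ, A))) * b) atTop (nhds (x * b)) := by
        rw [tendsto_iff_norm_sub_tendsto_zero]
        have hle : ∀ n, ‖(x * (e n : 𝓜(ℂ, A))) * b - x * b‖ ≤ ‖x‖ * ‖e n * a - a‖ := by
          intro n
          have : (x * (e n : 𝓜(ℂ, A))) * b - x * b = x * (((e n * a - a : A) : 𝓜(ℂ, A))) := by
            rw [← ha]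
            show x * ι (e n) * ι a - x * ι a = x * ι (e n * a - a)
            rw [map_sub, map_mul, mul_sub, mul_assoc]
          rw [this]
          calc ‖x * (((e n * a - a : A) : 𝓜(ℂ, A)))‖
              ≤ ‖x‖ * ‖((e n * a - a : A) : 𝓜(ℂ, A))‖ := norm_mul_le _ _
            _ = ‖x‖ * ‖e n * a - a‖ := by rw [SepExhAux.norm_coe]
        have h0 : Tendsto (fun n => ‖x‖ * ‖e n * a - a‖) atTop (nhds 0) := by
          simpa using (he.2 a).1.const_mul ‖x‖
        exact squeeze_zero (fun n => norm_nonneg _) hle h0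
      exact hBclosed.mem_of_tendsto htend (Eventually.of_forall hterm)
    · -- b * x
      have hterm : ∀ n, b * ((e n : 𝓜(ℂ, A)) * x) ∈ B := fun n =>
        hmulB _ hb _ (henx n)
      have htend : Tendsto (fun n => b * ((e n : 𝓜(ℂ, A)) * x)) atTop (nhds (b * x)) := by
        rw [tendsto_iff_norm_sub_tendsto_zero]
        have hle : ∀ n, ‖b * ((e n : 𝓜(ℂ, A)) * x) - b * x‖ ≤ ‖a * e n - a‖ * ‖x‖ := by
          intro n
          have : b * ((e n : 𝓜(ℂ, A)) * x) - b * x = (((a * e n - a : A) : 𝓜(ℂ, A))) * x := by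
            rw [← ha]
            show ι a * (ι (e n) * x) - ι a * x = ι (a * e n - a) * x
            rw [map_sub, map_mul, sub_mul, mul_assoc]
          rw [this]
          calc ‖(((a * e n - a : A) : 𝓜(ℂ, A))) * x‖
              ≤ ‖((a * e n - a : A) : 𝓜(ℂ, A))‖ * ‖x‖ := norm_mul_le _ _
            _ = ‖a * e n - a‖ * ‖x‖ := by rw [SepExhAux.norm_coe]
        have h0 : Tendsto (fun n => ‖a * e n - a‖ * ‖x‖) atTop (nhds 0) := by
          simpa using (he.2 a).2.mul_const ‖x‖
        exact squeeze_zero (fun n => norm_nonneg _) hle h0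
      exact hBclosed.mem_of_tendsto htend (Eventually.of_forall hterm)
  -- Part 2 : separability
  obtain ⟨D, hDc, hD⟩ := hXsep
  set D' : Set 𝓜(ℂ, A) := D ∪ star '' D ∪ {1} with hD'def
  have hD'c : D'.Countable := (hDc.union (hDc.image _)).union (Set.countable_singleton 1)
  set S' : Set 𝓜(ℂ, A) :=
    (fun p : 𝓜(ℂ, A) × ℕ => p.1 * (e p.2 : 𝓜(ℂ, A))) '' (D' ×ˢ Set.univ) with hS'def
  have hS'c : S'.Countable := (hD'c.prod Set.countable_univ).image _
  have hsub' : S' ⊆ (NonUnitalStarAlgebra.adjoin ℂ S' : Set 𝓜(ℂ, A)) :=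
    NonUnitalStarAlgebra.subset_adjoin ℂ S'
  have hSsub : S ⊆ closure (NonUnitalStarAlgebra.adjoin ℂ S' : Set 𝓜(ℂ, A)) := by
    rintro y ⟨x, hx, n, rfl⟩
    rcases hx with hx | h1
    · rcases hx with hx | ⟨x₀, hx₀, rfl⟩
      · obtain ⟨s, hsD, hst⟩ := hD x hx
        refine mem_closure_of_tendsto (b := atTop) (f := fun k => s k * (e n : 𝓜(ℂ, A))) ?_ ?_
        · rw [tendsto_iff_norm_sub_tendsto_zero]
          simpa [sub_mul] using (hst (e n)).1
        · exact Eventually.of_forall fun k => hsub'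
            ⟨(s k, n), ⟨Or.inl (Or.inl (hsD k)), trivial⟩, rfl⟩
      · obtain ⟨s, hsD, hst⟩ := hD x₀ hx₀
        have key : ∀ k, star (s k) * (e n : 𝓜(ℂ, A)) - star x₀ * (e n : 𝓜(ℂ, A)) =
            star ((e n : 𝓜(ℂ, A)) * (s k - x₀)) := by
          intro k
          rw [star_mul, hesa n, star_sub, sub_mul]
        refine mem_closure_of_tendsto (b := atTop) (f := fun k => star (s k) * (e n : 𝓜(ℂ, A))) ?_ ?_
        · rw [tendsto_iff_norm_sub_tendsto_zero]
          simp only [key, norm_star]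
          exact (hst (e n)).2
        · exact Eventually.of_forall fun k => hsub'
            ⟨(star (s k), n), ⟨Or.inl (Or.inr ⟨s k, hsD k, rfl⟩), trivial⟩, rfl⟩
    · rcases h1 with rfl
      exact subset_closure (hsub' ⟨(1, n), ⟨Or.inr rfl, trivial⟩, rfl⟩)
  have hadjsub : (NonUnitalStarAlgebra.adjoin ℂ S : Set 𝓜(ℂ, A)) ⊆
      closure (NonUnitalStarAlgebra.adjoin ℂ S' : Set 𝓜(ℂ, A)) :=
    NonUnitalStarAlgebra.adjoin_le (R := ℂ) (s := S)
      (S := (NonUnitalStarAlgebra.adjoin ℂ S').topologicalClosure) hSsub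
  have hBsub : B ⊆ closure (NonUnitalStarAlgebra.adjoin ℂ S' : Set 𝓜(ℂ, A)) := by
    rw [hB]
    exact closure_minimal hadjsub isClosed_closure
  have hstarS'c : (S' ∪ star S').Countable := by
    refine hS'c.union ?_
    have : (star S' : Set 𝓜(ℂ, A)) = star '' S' := by
      ext z; simp [Set.mem_star]
    rw [this]
    exact hS'c.image _
  have hadj_sep : TopologicalSpace.IsSeparable
      (NonUnitalStarAlgebra.adjoin ℂ S' : Set 𝓜(ℂ, A)) := by
    have hspan : (NonUnitalStarAlgebra.adjoin ℂ S' : Set 𝓜(ℂ, A)) =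
        (Submodule.span ℂ ((Subsemigroup.closure (S' ∪ star S') : Subsemigroup 𝓜(ℂ, A)) :
          Set 𝓜(ℂ, A)) : Set 𝓜(ℂ, A)) := by
      have := NonUnitalStarAlgebra.adjoin_eq_span (R := ℂ) (s := S')
      exact congrArg SetLike.coe this
    rw [hspan]
    exact TopologicalSpace.IsSeparable.span
      (SepExhAux.countable_semigroup_closure hstarS'c).isSeparable
  have part2 : TopologicalSpace.IsSeparable B :=
    (hadj_sep.closure).mono hBsub
  exact ⟨part1, part2, part3, part4⟩
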